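/- For n ≥ 3, the total domination polynomial of the chain triangular cactus T_n satisfies D_t(T_n,x) = (x+1) D_t(G_{n-1},x) + x^2 [D_t(G_{n-2},x) + D_t(G_{n-3},x)], where G_k denotes the chain triangular cactus of length k with a pendant vertex attached at the end cut-vertex. -/

import Mathlib

open Polynomial Finset

/-- `D` is a total dominating set of `G`: every vertex has a neighbor in `D`. -/
def isTDS {V : Type*} (G : SimpleGraph V) (D : Finset V) : Prop :=
  ∀ v : V, ∃ u ∈ D, G.Adj v u

/-- The total domination polynomial of `G` (with integer coefficients). -/
noncomputable def tdPoly {V : Type*} [Finite V] (G : SimpleGraph V) : Polynomial ℤ :=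
  letI := Fintype.ofFinite V
  letI : DecidablePred (isTDS G) := Classical.decPred _
  ∑ D ∈ Finset.univ.filter (isTDS G), X ^ D.card

/-- `tdCount G i` is the number of total dominating sets of `G` of cardinality `i`. -/
noncomputable def tdCount {V : Type*} [Finite V] (G : SimpleGraph V) (i : ℕ) : ℕ :=
  letI := Fintype.ofFinite V
  letI : DecidablePred (fun D : Finset V => D.card = i ∧ isTDS G D) := Classical.decPred _
  (Finset.univ.filter (fun D : Finset V => D.card = i ∧ isTDS G D)).card

/-- The total domination number of `G`. -/
noncomputable def tdNum {V : Type*} (G : SimpleGraph V) : ℕ :=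
  sInf {k | ∃ D : Finset V, D.card = k ∧ isTDS G D}

/-- The chain triangular cactus T_n : triangles on spine vertices u_0,...,u_n (first summand)
with apexes w_1,...,w_n (second summand); triangle i is u_{i-1}, u_i, w_i. -/
def triChain (n : ℕ) : SimpleGraph (Fin (n + 1) ⊕ Fin n) :=
  SimpleGraph.fromRel (fun a b =>
    (∃ i : Fin n, a = .inl i.castSucc ∧ b = .inl i.succ) ∨
    (∃ i : Fin n, a = .inl i.castSucc ∧ b = .inr i) ∨
    (∃ i : Fin n, a = .inl i.succ ∧ b = .inr i))

/-- G_n : the chain triangular cactus T_n with one pendant vertex attached at the last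
cut-vertex u_n. -/
def triChainPendant (n : ℕ) : SimpleGraph ((Fin (n + 1) ⊕ Fin n) ⊕ Unit) :=
  SimpleGraph.fromRel (fun a b =>
    (∃ x y, a = .inl x ∧ b = .inl y ∧ (triChain n).Adj x y) ∨
    (a = .inl (.inl (Fin.last n)) ∧ b = .inr ()))

set_option linter.dupNamespace false

namespace TDAux

abbrev Vt (n : ℕ) := Fin (n + 1) ⊕ Fin n

lemma adj_inl_inl (n : ℕ) (x y : Fin (n+1)) :
    (triChain n).Adj (.inl x) (.inl y) ↔ ((x:ℕ)+1 = y ∨ (y:ℕ)+1 = x) := by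
  simp only [triChain, SimpleGraph.fromRel_adj, ne_eq, Sum.inl.injEq, Sum.inr.injEq,
    and_false, false_and, exists_false, or_false, false_or, reduceCtorEq]
  constructor
  · rintro ⟨hne, (⟨i, rfl, rfl⟩ | ⟨i, rfl, rfl⟩)⟩
    · left; simp
    · right; simp
  · rintro (h | h)
    · have hx : (x:ℕ) < n := by omega
      exact ⟨fun he => by rw [he] at h; omega,
        Or.inl ⟨⟨x, hx⟩, Fin.ext (by simp), Fin.ext (by simpa using h.symm)⟩⟩
    · have hy : (y:ℕ) < n := by omega
      exact ⟨fun he => by rw [he] at h; omega,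
        Or.inr ⟨⟨y, hy⟩, Fin.ext (by simp), Fin.ext (by simpa using h.symm)⟩⟩

lemma adj_inl_inr (n : ℕ) (x : Fin (n+1)) (j : Fin n) :
    (triChain n).Adj (.inl x) (.inr j) ↔ ((x:ℕ) = j ∨ (x:ℕ) = (j:ℕ)+1) := by
  simp only [triChain, SimpleGraph.fromRel_adj, ne_eq, Sum.inl.injEq, Sum.inr.injEq,
    and_false, false_and, exists_false, or_false, false_or, reduceCtorEq, not_false_iff,
    true_and]
  constructor
  · rintro (⟨i, rfl, rfl⟩ | ⟨i, rfl, rfl⟩)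
    · left; simp
    · right; simp
  · rintro (h | h)
    · exact Or.inl ⟨j, Fin.ext (by simpa using h), rfl⟩
    · exact Or.inr ⟨j, Fin.ext (by simpa using h), rfl⟩

lemma adj_inr_inr (n : ℕ) (i j : Fin n) : ¬ (triChain n).Adj (.inr i) (.inr j) := by
  simp [triChain, SimpleGraph.fromRel_adj]

lemma adj_inr_inl (n : ℕ) (x : Fin (n+1)) (j : Fin n) :
    (triChain n).Adj (.inr j) (.inl x) ↔ ((x:ℕ) = j ∨ (x:ℕ) = (j:ℕ)+1) := by
  rw [SimpleGraph.adj_comm]; exact adj_inl_inr n x j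

/-- the last spine vertex -/
def uL (n : ℕ) : Vt n := Sum.inl (Fin.last n)
/-- the last apex in T_{n+1} -/
def wL (n : ℕ) : Vt (n+1) := Sum.inr (Fin.last n)

def ι {n : ℕ} : Vt n → Vt (n+1) := Sum.map Fin.castSucc Fin.castSucc

lemma ι_inj {n : ℕ} : Function.Injective (@ι n) :=
  Sum.map_injective.2 ⟨Fin.castSucc_injective _, Fin.castSucc_injective _⟩

lemma ι_ne_u {n : ℕ} (v : Vt n) : ι v ≠ uL (n+1) := by
  cases v with
  | inl x => simp [ι, uL, Fin.ext_iff]; omega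
  | inr j => simp [ι, uL]

lemma ι_ne_w {n : ℕ} (v : Vt n) : ι v ≠ wL n := by
  cases v with
  | inl x => simp [ι, wL]
  | inr j => simp [ι, wL, Fin.ext_iff]; omega

lemma u_ne_w (n : ℕ) : uL (n+1) ≠ wL n := by simp [uL, wL]

lemma vert_cases {n : ℕ} (x : Vt (n+1)) : (∃ v, x = ι v) ∨ x = uL (n+1) ∨ x = wL n := by
  cases x with
  | inl y =>
    rcases Fin.eq_castSucc_or_eq_last y with ⟨z, rfl⟩ | rfl
    · exact Or.inl ⟨Sum.inl z, rfl⟩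
    · exact Or.inr (Or.inl rfl)
  | inr j =>
    rcases Fin.eq_castSucc_or_eq_last j with ⟨z, rfl⟩ | rfl
    · exact Or.inl ⟨Sum.inr z, rfl⟩
    · exact Or.inr (Or.inr rfl)

lemma adj_iota {n : ℕ} (v y : Vt n) :
    (triChain (n+1)).Adj (ι v) (ι y) ↔ (triChain n).Adj v y := by
  cases v with
  | inl x => cases y with
    | inl z => simp [ι, adj_inl_inl]
    | inr j => simp [ι, adj_inl_inr]
  | inr i => cases y with
    | inl z => simp [ι, adj_inr_inl]
    | inr j => simp [ι, adj_inr_inr]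

lemma adj_iota_u {n : ℕ} (v : Vt n) :
    (triChain (n+1)).Adj (ι v) (uL (n+1)) ↔ v = uL n := by
  cases v with
  | inl x =>
    simp [ι, uL, adj_inl_inl, Fin.ext_iff]
    omega
  | inr j =>
    simp [ι, uL, adj_inr_inl]  -- careful direction
    omega

lemma adj_iota_w {n : ℕ} (v : Vt n) :
    (triChain (n+1)).Adj (ι v) (wL n) ↔ v = uL n := by
  cases v with
  | inl x =>
    simp [ι, wL, uL, adj_inl_inr, Fin.ext_iff]
    omega
  | inr j =>
    simp [ι, wL, uL, adj_inr_inr]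

lemma adj_u_w (n : ℕ) : (triChain (n+1)).Adj (uL (n+1)) (wL n) := by
  simp [uL, wL, adj_inl_inr]

def ιemb (n : ℕ) : Vt n ↪ Vt (n+1) := ⟨ι, ι_inj⟩

def bset (n : ℕ) (E : Finset (Vt n)) (a b : Bool) : Finset (Vt (n+1)) :=
  E.map (ιemb n) ∪ (if a then {uL (n+1)} else ∅) ∪ (if b then {wL n} else ∅)

lemma mem_bset {n : ℕ} (E : Finset (Vt n)) (a b : Bool) (x : Vt (n+1)) :
    x ∈ bset n E a b ↔ (∃ y ∈ E, ι y = x) ∨ (a = true ∧ x = uL (n+1)) ∨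
      (b = true ∧ x = wL n) := by
  cases a <;> cases b <;>
    simp [bset, ιemb, Finset.mem_union, Finset.mem_map, eq_comm (a := x)] <;> simp only [or_assoc, or_comm, or_left_comm]

lemma mem_iota_bset {n : ℕ} (E : Finset (Vt n)) (a b : Bool) (v : Vt n) :
    ι v ∈ bset n E a b ↔ v ∈ E := by
  rw [mem_bset]
  constructor
  · rintro (⟨y, hy, he⟩ | ⟨_, he⟩ | ⟨_, he⟩)
    · rwa [← ι_inj he]
    · exact absurd he (ι_ne_u v)
    · exact absurd he (ι_ne_w v)
  · exact fun h => Or.inl ⟨v, h, rfl⟩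

lemma mem_u_bset {n : ℕ} (E : Finset (Vt n)) (a b : Bool) :
    uL (n+1) ∈ bset n E a b ↔ a = true := by
  rw [mem_bset]
  constructor
  · rintro (⟨y, _, he⟩ | ⟨ha, _⟩ | ⟨_, he⟩)
    · exact absurd he (ι_ne_u y)
    · exact ha
    · exact absurd he (u_ne_w n)
  · exact fun h => Or.inr (Or.inl ⟨h, rfl⟩)

lemma mem_w_bset {n : ℕ} (E : Finset (Vt n)) (a b : Bool) :
    wL n ∈ bset n E a b ↔ b = true := by
  rw [mem_bset]
  constructor
  · rintro (⟨y, _, he⟩ | ⟨_, he⟩ | ⟨hb, _⟩)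
    · exact absurd he (ι_ne_w y)
    · exact absurd he.symm (u_ne_w n)
    · exact hb
  · exact fun h => Or.inr (Or.inr ⟨h, rfl⟩)

lemma card_bset {n : ℕ} (E : Finset (Vt n)) (a b : Bool) :
    (bset n E a b).card = E.card + (if a then 1 else 0) + (if b then 1 else 0) := by
  rw [bset, Finset.card_union_of_disjoint, Finset.card_union_of_disjoint]
  · cases a <;> cases b <;> simp
  · rw [Finset.disjoint_left]
    intro x hx
    rcases Finset.mem_map.1 hx with ⟨y, _, rfl⟩
    cases a <;> simp [ιemb, ι_ne_u y]
  · rw [Finset.disjoint_left]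
    intro x hx
    rcases Finset.mem_union.1 hx with hx | hx
    · rcases Finset.mem_map.1 hx with ⟨y, _, rfl⟩
      cases b <;> simp [ιemb, ι_ne_w y]
    · cases a <;> cases b <;> simp_all [u_ne_w n]

lemma bset_bijective (n : ℕ) :
    Function.Bijective (fun p : Finset (Vt n) × Bool × Bool => bset n p.1 p.2.1 p.2.2) := by
  constructor
  · rintro ⟨E, a, b⟩ ⟨E', a', b'⟩ h
    simp only at h
    have hE : E = E' := by
      ext v; rw [← mem_iota_bset E a b, h, mem_iota_bset]
    have ha : a = a' := by
      rw [← Bool.coe_iff_coe, ← mem_u_bset E a b, h, mem_u_bset]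
    have hb : b = b' := by
      rw [← Bool.coe_iff_coe, ← mem_w_bset E a b, h, mem_w_bset]
    simp [hE, ha, hb]
  · intro D
    classical
    refine ⟨⟨Finset.univ.filter (fun v => ι v ∈ D), decide (uL (n+1) ∈ D), decide (wL n ∈ D)⟩, ?_⟩
    simp only
    ext x
    rw [mem_bset]
    rcases vert_cases x with ⟨v, rfl⟩ | rfl | rfl
    · simp only [decide_eq_true_eq]
      constructor
      · rintro (⟨y, hy, he⟩ | ⟨_, he⟩ | ⟨_, he⟩)
        · rw [Finset.mem_filter] at hy; rw [← ι_inj he]; exact hy.2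
        · exact absurd he (ι_ne_u v)
        · exact absurd he (ι_ne_w v)
      · intro h; exact Or.inl ⟨v, Finset.mem_filter.2 ⟨Finset.mem_univ v, h⟩, rfl⟩
    · simp only [decide_eq_true_eq]
      constructor
      · rintro (⟨y, _, he⟩ | ⟨h, _⟩ | ⟨_, he⟩)
        · exact absurd he (ι_ne_u y)
        · exact h
        · exact absurd he (u_ne_w n)
      · intro h; exact Or.inr (Or.inl ⟨h, trivial⟩)
    · simp only [decide_eq_true_eq]
      constructor
      · rintro (⟨y, _, he⟩ | ⟨_, he⟩ | ⟨h, _⟩)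
        · exact absurd he (ι_ne_w y)
        · exact absurd he.symm (u_ne_w n)
        · exact h
      · intro h; exact Or.inr (Or.inr ⟨h, trivial⟩)

lemma master (n : ℕ) (f : Finset (Vt (n+1)) → Polynomial ℤ) :
    ∑ D : Finset (Vt (n+1)), f D =
      ∑ E : Finset (Vt n), ∑ a : Bool, ∑ b : Bool, f (bset n E a b) := by
  rw [← Function.Bijective.sum_comp (bset_bijective n) f, Fintype.sum_prod_type]
  exact Finset.sum_congr rfl fun E _ => Fintype.sum_prod_type _
/-- last vertex is dominated -/
def dm (n : ℕ) (D : Finset (Vt n)) : Prop := ∃ u ∈ D, (triChain n).Adj (uL n) u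
/-- every vertex except possibly the last is dominated -/
def pc (n : ℕ) (D : Finset (Vt n)) : Prop :=
  ∀ v : Vt n, v ≠ uL n → ∃ u ∈ D, (triChain n).Adj v u

lemma isTDS_iff (n : ℕ) (D : Finset (Vt n)) :
    isTDS (triChain n) D ↔ pc n D ∧ dm n D := by
  constructor
  · exact fun h => ⟨fun v _ => h v, h (uL n)⟩
  · rintro ⟨h1, h2⟩ v
    by_cases hv : v = uL n
    · rw [hv]; exact h2
    · exact h1 v hv

lemma dom_bset_iota {n : ℕ} (E : Finset (Vt n)) (a b : Bool) (v : Vt n) :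
    (∃ z ∈ bset n E a b, (triChain (n+1)).Adj (ι v) z) ↔
      (∃ y ∈ E, (triChain n).Adj v y) ∨ (v = uL n ∧ (a = true ∨ b = true)) := by
  constructor
  · rintro ⟨z, hz, hadj⟩
    rcases (mem_bset E a b z).1 hz with ⟨y, hy, rfl⟩ | ⟨ha, rfl⟩ | ⟨hb, rfl⟩
    · exact Or.inl ⟨y, hy, (adj_iota v y).1 hadj⟩
    · exact Or.inr ⟨(adj_iota_u v).1 hadj, Or.inl ha⟩
    · exact Or.inr ⟨(adj_iota_w v).1 hadj, Or.inr hb⟩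
  · rintro (⟨y, hy, h⟩ | ⟨rfl, ha | hb⟩)
    · exact ⟨ι y, (mem_iota_bset E a b y).2 hy, (adj_iota v y).2 h⟩
    · exact ⟨uL (n+1), (mem_u_bset E a b).2 ha, (adj_iota_u _).2 rfl⟩
    · exact ⟨wL n, (mem_w_bset E a b).2 hb, (adj_iota_w _).2 rfl⟩

lemma dom_bset_u {n : ℕ} (E : Finset (Vt n)) (a b : Bool) :
    (∃ z ∈ bset n E a b, (triChain (n+1)).Adj (uL (n+1)) z) ↔
      (uL n ∈ E ∨ b = true) := by
  constructor
  · rintro ⟨z, hz, hadj⟩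
    rcases (mem_bset E a b z).1 hz with ⟨y, hy, rfl⟩ | ⟨_, rfl⟩ | ⟨hb, rfl⟩
    · have := (adj_iota_u y).1 hadj.symm
      rw [← this]; exact Or.inl hy
    · exact absurd hadj (SimpleGraph.irrefl _)
    · exact Or.inr hb
  · rintro (h | hb)
    · exact ⟨ι (uL n), (mem_iota_bset E a b _).2 h, ((adj_iota_u _).2 rfl).symm⟩
    · exact ⟨wL n, (mem_w_bset E a b).2 hb, adj_u_w n⟩

lemma dom_bset_w {n : ℕ} (E : Finset (Vt n)) (a b : Bool) :
    (∃ z ∈ bset n E a b, (triChain (n+1)).Adj (wL n) z) ↔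
      (uL n ∈ E ∨ a = true) := by
  constructor
  · rintro ⟨z, hz, hadj⟩
    rcases (mem_bset E a b z).1 hz with ⟨y, hy, rfl⟩ | ⟨ha, rfl⟩ | ⟨_, rfl⟩
    · have := (adj_iota_w y).1 hadj.symm
      rw [← this]; exact Or.inl hy
    · exact Or.inr ha
    · exact absurd hadj (SimpleGraph.irrefl _)
  · rintro (h | ha)
    · exact ⟨ι (uL n), (mem_iota_bset E a b _).2 h, ((adj_iota_w _).2 rfl).symm⟩
    · exact ⟨uL (n+1), (mem_u_bset E a b).2 ha, (adj_u_w n).symm⟩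

lemma pc_bset {n : ℕ} (E : Finset (Vt n)) (a b : Bool) :
    pc (n+1) (bset n E a b) ↔
      pc n E ∧ (dm n E ∨ a = true ∨ b = true) ∧ (uL n ∈ E ∨ a = true) := by
  constructor
  · intro H
    refine ⟨fun v hv => ?_, ?_, ?_⟩
    · rcases (dom_bset_iota E a b v).1 (H (ι v) (ι_ne_u v)) with h | ⟨he, _⟩
      · exact h
      · exact absurd he hv
    · rcases (dom_bset_iota E a b (uL n)).1 (H (ι (uL n)) (ι_ne_u _)) with h | ⟨_, h⟩
      · exact Or.inl h
      · exact Or.inr h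
    · exact (dom_bset_w E a b).1 (H (wL n) (Ne.symm (u_ne_w n)))
  · rintro ⟨h1, h2, h3⟩ v hv
    rcases vert_cases v with ⟨v', rfl⟩ | rfl | rfl
    · by_cases hv' : v' = uL n
      · subst hv'
        refine (dom_bset_iota E a b _).2 ?_
        rcases h2 with h | h
        · exact Or.inl h
        · exact Or.inr ⟨rfl, h⟩
      · exact (dom_bset_iota E a b v').2 (Or.inl (h1 v' hv'))
    · exact absurd rfl hv
    · exact (dom_bset_w E a b).2 h3

open scoped Classical in
noncomputable def Sp (n : ℕ) : Polynomial ℤ :=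
  ∑ D : Finset (Vt n), if uL n ∈ D ∧ pc n D then X ^ D.card else 0

open scoped Classical in
noncomputable def Rp (n : ℕ) : Polynomial ℤ :=
  ∑ D : Finset (Vt n), if uL n ∈ D ∧ pc n D ∧ dm n D then X ^ D.card else 0

open scoped Classical in
noncomputable def Qp (n : ℕ) : Polynomial ℤ :=
  ∑ D : Finset (Vt n), if uL n ∉ D ∧ pc n D then X ^ D.card else 0

open scoped Classical in
lemma sum_pc_split (n : ℕ) :
    (∑ D : Finset (Vt n), if pc n D then (X : Polynomial ℤ) ^ D.card else 0)
      = Sp n + Qp n := by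
  rw [Sp, Qp, ← Finset.sum_add_distrib]
  refine Finset.sum_congr rfl fun D _ => ?_
  by_cases h : uL n ∈ D <;> by_cases h2 : pc n D <;> simp [h, h2]
lemma dm_bset {n : ℕ} (E : Finset (Vt n)) (a b : Bool) :
    dm (n+1) (bset n E a b) ↔ (uL n ∈ E ∨ b = true) := dom_bset_u E a b

open scoped Classical in
lemma Sp_succ (n : ℕ) : Sp (n+1) = (X^2 + X) * (Sp n + Qp n) := by
  rw [Sp, master n, ← sum_pc_split n, Finset.mul_sum]
  refine Finset.sum_congr rfl fun E _ => ?_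
  simp only [Fintype.sum_bool, mem_u_bset, pc_bset, card_bset]
  by_cases h1 : pc n E <;> by_cases h2 : dm n E <;> by_cases h3 : uL n ∈ E <;>
    simp [h1, h2, h3] <;> ring

open scoped Classical in
lemma Rp_succ (n : ℕ) : Rp (n+1) = X^2 * (Sp n + Qp n) + X * Sp n := by
  rw [Rp, master n, ← sum_pc_split n, Sp, Finset.mul_sum, Finset.mul_sum,
    ← Finset.sum_add_distrib]
  refine Finset.sum_congr rfl fun E _ => ?_
  simp only [Fintype.sum_bool, mem_u_bset, pc_bset, dm_bset, card_bset]
  by_cases h1 : pc n E <;> by_cases h2 : dm n E <;> by_cases h3 : uL n ∈ E <;>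
    simp [h1, h2, h3] <;> ring

open scoped Classical in
lemma Qp_succ (n : ℕ) : Qp (n+1) = X * Sp n + Rp n := by
  rw [Qp, master n, Sp, Rp, Finset.mul_sum, ← Finset.sum_add_distrib]
  refine Finset.sum_congr rfl fun E _ => ?_
  simp only [Fintype.sum_bool, mem_u_bset, pc_bset, dm_bset, card_bset]
  by_cases h1 : pc n E <;> by_cases h2 : dm n E <;> by_cases h3 : uL n ∈ E <;>
    simp [h1, h2, h3] <;> ring
open scoped Classical in
lemma tdPoly_eq {V : Type*} [Fintype V] (G : SimpleGraph V) :
    tdPoly G = ∑ D : Finset V, if isTDS G D then (X : Polynomial ℤ) ^ D.card else 0 := by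
  unfold tdPoly
  rw [Subsingleton.elim (Fintype.ofFinite V) ‹Fintype V›, Finset.sum_filter]

open scoped Classical in
lemma tdPoly_triChain_succ (n : ℕ) :
    tdPoly (triChain (n+1)) = X^2 * (Sp n + Qp n) + X * Sp n + X * Sp n + Rp n := by
  rw [tdPoly_eq]
  have h0 : ∀ D : Finset (Vt (n+1)),
      (if isTDS (triChain (n+1)) D then (X : Polynomial ℤ) ^ D.card else 0)
        = if pc (n+1) D ∧ dm (n+1) D then (X : Polynomial ℤ) ^ D.card else 0 := by
    intro D
    by_cases h : isTDS (triChain (n+1)) D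
    · rw [if_pos h, if_pos ((isTDS_iff (n+1) D).1 h)]
    · rw [if_neg h, if_neg (fun hc => h ((isTDS_iff (n+1) D).2 hc))]
  rw [Finset.sum_congr rfl fun D _ => h0 D, master n, ← sum_pc_split n, Sp, Rp,
    Finset.mul_sum, Finset.mul_sum,
    ← Finset.sum_add_distrib, ← Finset.sum_add_distrib, ← Finset.sum_add_distrib]
  refine Finset.sum_congr rfl fun E _ => ?_
  simp only [Fintype.sum_bool, pc_bset, dm_bset, card_bset]
  by_cases h1 : pc n E <;> by_cases h2 : dm n E <;> by_cases h3 : uL n ∈ E <;>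
    simp [h1, h2, h3] <;> ring
abbrev Wt (n : ℕ) := (Fin (n + 1) ⊕ Fin n) ⊕ Unit

def pt (n : ℕ) : Wt n := Sum.inr ()

lemma padj_inl_inl {n : ℕ} (x y : Vt n) :
    (triChainPendant n).Adj (.inl x) (.inl y) ↔ (triChain n).Adj x y := by
  simp only [triChainPendant, SimpleGraph.fromRel_adj, ne_eq, Sum.inl.injEq,
    and_false, false_and, exists_false, or_false, false_or, reduceCtorEq, exists_and_left,
    exists_eq_left']
  constructor
  · rintro ⟨hne, (h | h)⟩
    · exact h
    · exact h.symm
  · intro h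
    exact ⟨fun he => h.ne he, Or.inl h⟩

lemma padj_inl_pt {n : ℕ} (x : Vt n) :
    (triChainPendant n).Adj (.inl x) (pt n) ↔ x = uL n := by
  simp only [triChainPendant, pt, uL, SimpleGraph.fromRel_adj, ne_eq, Sum.inl.injEq,
    and_false, false_and, exists_false, or_false, false_or, reduceCtorEq, and_true,
    not_false_iff, true_and]

def pbset (n : ℕ) (E : Finset (Vt n)) (q : Bool) : Finset (Wt n) :=
  E.map Function.Embedding.inl ∪ (if q then {pt n} else ∅)

lemma mem_pbset {n : ℕ} (E : Finset (Vt n)) (q : Bool) (x : Wt n) :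
    x ∈ pbset n E q ↔ (∃ y ∈ E, Sum.inl y = x) ∨ (q = true ∧ x = pt n) := by
  cases q <;> simp [pbset, Finset.mem_union, Finset.mem_map, eq_comm (a := x)] <;> simp only [or_assoc, or_comm, or_left_comm]

lemma mem_inl_pbset {n : ℕ} (E : Finset (Vt n)) (q : Bool) (v : Vt n) :
    (Sum.inl v : Wt n) ∈ pbset n E q ↔ v ∈ E := by
  rw [mem_pbset]
  constructor
  · rintro (⟨y, hy, he⟩ | ⟨_, he⟩)
    · rwa [← Sum.inl_injective he]
    · exact absurd he (by simp [pt])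
  · exact fun h => Or.inl ⟨v, h, rfl⟩

lemma mem_pt_pbset {n : ℕ} (E : Finset (Vt n)) (q : Bool) :
    pt n ∈ pbset n E q ↔ q = true := by
  rw [mem_pbset]
  constructor
  · rintro (⟨y, _, he⟩ | ⟨h, _⟩)
    · exact absurd he (by simp [pt])
    · exact h
  · exact fun h => Or.inr ⟨h, rfl⟩

lemma card_pbset {n : ℕ} (E : Finset (Vt n)) (q : Bool) :
    (pbset n E q).card = E.card + (if q then 1 else 0) := by
  rw [pbset, Finset.card_union_of_disjoint]
  · cases q <;> simp
  · rw [Finset.disjoint_left]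
    intro x hx
    rcases Finset.mem_map.1 hx with ⟨y, _, rfl⟩
    cases q <;> simp [pt]

lemma pbset_bijective (n : ℕ) :
    Function.Bijective (fun p : Finset (Vt n) × Bool => pbset n p.1 p.2) := by
  constructor
  · rintro ⟨E, q⟩ ⟨E', q'⟩ h
    simp only at h
    have hE : E = E' := by
      ext v; rw [← mem_inl_pbset E q, h, mem_inl_pbset]
    have hq : q = q' := by
      rw [← Bool.coe_iff_coe, ← mem_pt_pbset E q, h, mem_pt_pbset]
    simp [hE, hq]
  · intro D
    classical
    refine ⟨⟨Finset.univ.filter (fun v => (Sum.inl v : Wt n) ∈ D), decide (pt n ∈ D)⟩, ?_⟩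
    simp only
    ext x
    rw [mem_pbset]
    cases x with
    | inl v =>
      simp only [decide_eq_true_eq]
      constructor
      · rintro (⟨y, hy, he⟩ | ⟨_, he⟩)
        · rw [Finset.mem_filter] at hy; rw [← Sum.inl_injective he]; exact hy.2
        · exact absurd he (by simp [pt])
      · intro h; exact Or.inl ⟨v, Finset.mem_filter.2 ⟨Finset.mem_univ v, h⟩, rfl⟩
    | inr u =>
      cases u
      simp only [decide_eq_true_eq]
      constructor
      · rintro (⟨y, _, he⟩ | ⟨h, _⟩)
        · exact absurd he (by simp [pt])
        · exact h
      · intro h; exact Or.inr ⟨h, rfl⟩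

lemma pmaster (n : ℕ) (f : Finset (Wt n) → Polynomial ℤ) :
    ∑ D : Finset (Wt n), f D = ∑ E : Finset (Vt n), ∑ q : Bool, f (pbset n E q) := by
  rw [← Function.Bijective.sum_comp (pbset_bijective n) f, Fintype.sum_prod_type]

lemma isTDS_pbset {n : ℕ} (E : Finset (Vt n)) (q : Bool) :
    isTDS (triChainPendant n) (pbset n E q) ↔
      pc n E ∧ (dm n E ∨ q = true) ∧ uL n ∈ E := by
  have hdominl : ∀ v : Vt n, (∃ z ∈ pbset n E q, (triChainPendant n).Adj (.inl v) z) ↔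
      ((∃ y ∈ E, (triChain n).Adj v y) ∨ (v = uL n ∧ q = true)) := by
    intro v
    constructor
    · rintro ⟨z, hz, hadj⟩
      rcases (mem_pbset E q z).1 hz with ⟨y, hy, rfl⟩ | ⟨hq, rfl⟩
      · exact Or.inl ⟨y, hy, (padj_inl_inl v y).1 hadj⟩
      · exact Or.inr ⟨(padj_inl_pt v).1 hadj, hq⟩
    · rintro (⟨y, hy, h⟩ | ⟨rfl, hq⟩)
      · exact ⟨.inl y, (mem_inl_pbset E q y).2 hy, (padj_inl_inl v y).2 h⟩
      · exact ⟨pt n, (mem_pt_pbset E q).2 hq, (padj_inl_pt _).2 rfl⟩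
  have hdompt : (∃ z ∈ pbset n E q, (triChainPendant n).Adj (pt n) z) ↔ uL n ∈ E := by
    constructor
    · rintro ⟨z, hz, hadj⟩
      rcases (mem_pbset E q z).1 hz with ⟨y, hy, rfl⟩ | ⟨_, rfl⟩
      · have := (padj_inl_pt y).1 hadj.symm
        rwa [← this]
      · exact absurd hadj (SimpleGraph.irrefl _)
    · intro h
      exact ⟨.inl (uL n), (mem_inl_pbset E q _).2 h, ((padj_inl_pt _).2 rfl).symm⟩
  constructor
  · intro H
    refine ⟨fun v hv => ?_, ?_, hdompt.1 (H (pt n))⟩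
    · rcases (hdominl v).1 (H (.inl v)) with h | ⟨he, _⟩
      · exact h
      · exact absurd he hv
    · rcases (hdominl (uL n)).1 (H (.inl (uL n))) with h | ⟨_, h⟩
      · exact Or.inl h
      · exact Or.inr h
  · rintro ⟨h1, h2, h3⟩ v
    cases v with
    | inl v' =>
      by_cases hv' : v' = uL n
      · subst hv'
        refine (hdominl _).2 ?_
        rcases h2 with h | h
        · exact Or.inl h
        · exact Or.inr ⟨rfl, h⟩
      · exact (hdominl v').2 (Or.inl (h1 v' hv'))
    | inr u =>
      cases u
      exact hdompt.2 h3

open scoped Classical in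
lemma tdPoly_pendant (n : ℕ) : tdPoly (triChainPendant n) = Rp n + X * Sp n := by
  rw [tdPoly_eq, pmaster n, Rp, Sp, Finset.mul_sum, ← Finset.sum_add_distrib]
  refine Finset.sum_congr rfl fun E _ => ?_
  simp only [Fintype.sum_bool, isTDS_pbset, card_pbset]
  by_cases h1 : pc n E <;> by_cases h2 : dm n E <;> by_cases h3 : uL n ∈ E <;>
    simp [h1, h2, h3] <;> ring
lemma key (k : ℕ) :
    tdPoly (triChain (k+3)) =
      (X + 1) * tdPoly (triChainPendant (k+2)) +
        X ^ 2 * (tdPoly (triChainPendant (k+1)) + tdPoly (triChainPendant k)) := by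
  show tdPoly (triChain ((k+2)+1)) =
      (X + 1) * tdPoly (triChainPendant (k+2)) +
        X ^ 2 * (tdPoly (triChainPendant (k+1)) + tdPoly (triChainPendant k))
  rw [tdPoly_triChain_succ (k+2), tdPoly_pendant, tdPoly_pendant, tdPoly_pendant]
  have e2 : k + 2 = (k + 1) + 1 := rfl
  rw [e2, Sp_succ (k+1), Rp_succ (k+1), Qp_succ (k+1), Qp_succ k]
  ring

end TDAux

theorem tdPoly_triChain_rec (n : ℕ) (hn : 3 ≤ n) :
    tdPoly (triChain n) =
      (X + 1) * tdPoly (triChainPendant (n - 1)) +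
        X ^ 2 * (tdPoly (triChainPendant (n - 2)) + tdPoly (triChainPendant (n - 3))) := by
  obtain ⟨m, rfl⟩ : ∃ m, n = m + 3 := ⟨n - 3, by omega⟩
  exact TDAux.key m
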